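/- For all real numbers a and b, the integral over ℝ of x·Φ(a+bx)·φ(x) dx equals (b/√(1+b²))·φ(a/√(1+b²)). -/

import Mathlib

open MeasureTheory Real
open Filter

/-- Standard normal PDF. -/
noncomputable def stdPDF (x : ℝ) : ℝ := (Real.sqrt (2 * Real.pi))⁻¹ * Real.exp (-(x ^ 2) / 2)

/-- Standard normal CDF. -/
noncomputable def stdCDF (x : ℝ) : ℝ := ∫ t in Set.Iic x, stdPDF t

lemma stdPDF_eq (x : ℝ) : stdPDF x = (Real.sqrt (2 * Real.pi))⁻¹ * Real.exp (-(2⁻¹ : ℝ) * x ^ 2) := by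
  rw [stdPDF]; ring_nf

lemma continuous_stdPDF : Continuous stdPDF := by
  unfold stdPDF; fun_prop

lemma stdPDF_nonneg (x : ℝ) : 0 ≤ stdPDF x := by
  unfold stdPDF
  positivity

lemma integrable_stdPDF : Integrable stdPDF := by
  have := (integrable_exp_neg_mul_sq (by norm_num : (0:ℝ) < 2⁻¹)).const_mul
    (Real.sqrt (2 * Real.pi))⁻¹
  refine this.congr ?_
  filter_upwards with x
  rw [stdPDF_eq]

lemma integral_stdPDF : ∫ x, stdPDF x = 1 := by
  have h : ∫ x : ℝ, Real.exp (-(2⁻¹:ℝ) * x ^ 2) = Real.sqrt (π / 2⁻¹) := integral_gaussian 2⁻¹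
  have : ∫ x, stdPDF x = (Real.sqrt (2 * π))⁻¹ * Real.sqrt (π / 2⁻¹) := by
    rw [← h, ← integral_const_mul]
    congr 1; ext x; rw [stdPDF_eq]
  rw [this]
  rw [show π / 2⁻¹ = 2 * π by ring]
  rw [inv_mul_cancel₀ (by positivity)]

lemma stdCDF_nonneg (x : ℝ) : 0 ≤ stdCDF x :=
  integral_nonneg fun t => stdPDF_nonneg t

lemma stdCDF_le_one (x : ℝ) : stdCDF x ≤ 1 := by
  rw [← integral_stdPDF]
  exact setIntegral_le_integral integrable_stdPDF
    (Filter.Eventually.of_forall fun t => stdPDF_nonneg t)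

lemma hasDerivAt_stdCDF (x : ℝ) : HasDerivAt stdCDF (stdPDF x) x := by
  have heq : ∀ y, stdCDF y = stdCDF 0 + ∫ t in (0:ℝ)..y, stdPDF t := by
    intro y
    rw [← intervalIntegral.integral_Iic_sub_Iic integrable_stdPDF.integrableOn
      integrable_stdPDF.integrableOn]
    unfold stdCDF; ring
  have h : HasDerivAt (fun y => stdCDF 0 + ∫ t in (0:ℝ)..y, stdPDF t) (stdPDF x) x := by
    refine HasDerivAt.const_add _ ?_
    exact intervalIntegral.integral_hasDerivAt_right
      (integrable_stdPDF.intervalIntegrable)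
      (continuous_stdPDF.stronglyMeasurableAtFilter _ _)
      continuous_stdPDF.continuousAt
  exact h.congr_deriv rfl |>.congr_of_eventuallyEq (Filter.Eventually.of_forall heq) |>.congr_deriv rfl

lemma hasDerivAt_stdPDF (x : ℝ) : HasDerivAt stdPDF (-x * stdPDF x) x := by
  have h1 : HasDerivAt (fun y : ℝ => -(y ^ 2) / 2) (-x) x := by
    have : HasDerivAt (fun y : ℝ => -(y ^ 2) / 2) (-(2 * x ^ 1) / 2) x := by
      exact (((hasDerivAt_pow 2 x).neg).div_const 2)
    convert this using 1; ring
  have h2 : HasDerivAt (fun y : ℝ => Real.exp (-(y ^ 2) / 2))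
      (Real.exp (-(x ^ 2) / 2) * (-x)) x := (Real.hasDerivAt_exp _).comp x h1
  have := h2.const_mul (Real.sqrt (2 * Real.pi))⁻¹
  unfold stdPDF
  refine this.congr_deriv ?_
  ring

lemma tendsto_stdPDF_atTop : Tendsto stdPDF atTop (nhds 0) := by
  have h : Tendsto (fun x : ℝ => Real.exp (-(x ^ 2) / 2)) atTop (nhds 0) := by
    apply Real.tendsto_exp_atBot.comp
    have : Tendsto (fun x : ℝ => x ^ 2 / 2) atTop atTop :=
      (tendsto_pow_atTop (by norm_num)).atTop_div_const (by norm_num)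
    have := tendsto_neg_atBot_iff.mpr this
    refine this.congr' ?_
    filter_upwards with x; ring
  have := h.const_mul (Real.sqrt (2 * Real.pi))⁻¹
  rw [mul_zero] at this
  exact this.congr fun x => rfl

lemma tendsto_stdPDF_atBot : Tendsto stdPDF atBot (nhds 0) := by
  have h := tendsto_stdPDF_atTop.comp tendsto_neg_atBot_atTop
  refine h.congr fun x => ?_
  simp [Function.comp, stdPDF, neg_sq]

lemma continuous_stdCDF : Continuous stdCDF :=
  continuous_iff_continuousAt.mpr fun x => (hasDerivAt_stdCDF x).continuousAt

lemma stdPDF_le (x : ℝ) : stdPDF x ≤ (Real.sqrt (2 * Real.pi))⁻¹ := by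
  unfold stdPDF
  calc (Real.sqrt (2 * Real.pi))⁻¹ * Real.exp (-(x ^ 2) / 2)
      ≤ (Real.sqrt (2 * Real.pi))⁻¹ * 1 := by
        have : Real.exp (-(x ^ 2) / 2) ≤ 1 := Real.exp_le_one_iff.mpr (by nlinarith [sq_nonneg x])
        have h0 : (0:ℝ) ≤ (Real.sqrt (2 * Real.pi))⁻¹ := by positivity
        nlinarith [Real.exp_pos (-(x ^ 2) / 2)]
    _ = _ := mul_one _

lemma integrable_prod (a b : ℝ) : Integrable (fun x => stdPDF (a + b * x) * stdPDF x) := by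
  refine Integrable.mono (integrable_stdPDF.const_mul (Real.sqrt (2 * Real.pi))⁻¹)
    ((continuous_stdPDF.comp (by continuity)).mul continuous_stdPDF).aestronglyMeasurable ?_
  filter_upwards with x
  rw [Real.norm_eq_abs, Real.norm_eq_abs, abs_of_nonneg (mul_nonneg (stdPDF_nonneg _) (stdPDF_nonneg _)),
    abs_of_nonneg (mul_nonneg (by positivity) (stdPDF_nonneg x))]
  exact mul_le_mul_of_nonneg_right (stdPDF_le _) (stdPDF_nonneg _)

lemma integrable_x_stdPDF : Integrable (fun x : ℝ => x * stdPDF x) := by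
  have := (integrable_mul_exp_neg_mul_sq (by norm_num : (0:ℝ) < 2⁻¹)).const_mul
    (Real.sqrt (2 * Real.pi))⁻¹
  refine this.congr ?_
  filter_upwards with x
  rw [stdPDF_eq]; ring

lemma integrable_main (a b : ℝ) : Integrable (fun x => x * stdCDF (a + b * x) * stdPDF x) := by
  refine Integrable.mono integrable_x_stdPDF
    ((continuous_id.mul (continuous_stdCDF.comp (by continuity))).mul continuous_stdPDF).aestronglyMeasurable ?_
  filter_upwards with x
  rw [Real.norm_eq_abs, Real.norm_eq_abs, abs_mul, abs_mul, abs_mul]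
  have h1 : |stdCDF (a + b * x)| ≤ 1 := by
    rw [abs_of_nonneg (stdCDF_nonneg _)]; exact stdCDF_le_one _
  calc |x| * |stdCDF (a + b * x)| * |stdPDF x| ≤ |x| * 1 * |stdPDF x| := by
        gcongr
    _ = |x| * |stdPDF x| := by ring

lemma integral_prod_eq (a b : ℝ) :
    ∫ x, stdPDF (a + b * x) * stdPDF x
      = (1 / Real.sqrt (1 + b ^ 2)) * stdPDF (a / Real.sqrt (1 + b ^ 2)) := by
  set s : ℝ := 1 + b ^ 2 with hs_def
  have hs : 0 < s := by positivity
  have key : ∀ x : ℝ, stdPDF (a + b * x) * stdPDF x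
      = (2 * π)⁻¹ * Real.exp (-(a ^ 2) / (2 * s)) * Real.exp (-(s / 2) * (x + a * b / s) ^ 2) := by
    intro x
    unfold stdPDF
    have hsqrt : ((Real.sqrt (2 * π))⁻¹) * ((Real.sqrt (2 * π))⁻¹) = (2 * π)⁻¹ := by
      rw [← mul_inv, Real.mul_self_sqrt (by positivity)]
    have hexp : Real.exp (-((a + b * x) ^ 2) / 2) * Real.exp (-(x ^ 2) / 2)
        = Real.exp (-(a ^ 2) / (2 * s)) * Real.exp (-(s / 2) * (x + a * b / s) ^ 2) := by
      rw [← Real.exp_add, ← Real.exp_add]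
      congr 1
      field_simp
      ring
    calc (Real.sqrt (2 * π))⁻¹ * Real.exp (-((a + b * x) ^ 2) / 2) *
          ((Real.sqrt (2 * π))⁻¹ * Real.exp (-(x ^ 2) / 2))
        = ((Real.sqrt (2 * π))⁻¹ * (Real.sqrt (2 * π))⁻¹) *
            (Real.exp (-((a + b * x) ^ 2) / 2) * Real.exp (-(x ^ 2) / 2)) := by ring
      _ = _ := by rw [hsqrt, hexp]; ring
  rw [integral_congr_ae (Filter.Eventually.of_forall key)]
  rw [integral_const_mul]
  have htrans : ∫ x : ℝ, Real.exp (-(s / 2) * (x + a * b / s) ^ 2)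
      = ∫ x : ℝ, Real.exp (-(s / 2) * x ^ 2) :=
    integral_add_right_eq_self (fun y => Real.exp (-(s / 2) * y ^ 2)) (a * b / s)
  rw [htrans, integral_gaussian]
  have h1 : π / (s / 2) = 2 * π / s := by field_simp
  rw [h1, Real.sqrt_div (by positivity) s]
  unfold stdPDF
  have h2 : ((a / Real.sqrt s) ^ 2) = a ^ 2 / s := by
    rw [div_pow, Real.sq_sqrt hs.le]
  rw [h2]
  have h3 : Real.sqrt (2 * π) > 0 := by positivity
  have h4 : Real.sqrt s > 0 := Real.sqrt_pos.mpr hs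
  have h5 : Real.sqrt (2 * π) * Real.sqrt (2 * π) = 2 * π := Real.mul_self_sqrt (by positivity)
  have h6 : -(a ^ 2) / (2 * s) = -(a ^ 2 / s) / 2 := by
    rw [neg_div, neg_div, div_div, mul_comm s 2]
  rw [h6]
  rw [div_eq_mul_inv (Real.sqrt (2 * π)), mul_comm (Real.sqrt (2 * π)) (Real.sqrt s)⁻¹]
  have h8 : (2 * π)⁻¹ * Real.sqrt (2 * π) = (Real.sqrt (2 * π))⁻¹ := by
    rw [← h5, mul_inv]
    field_simp
    rw [Real.sqrt_sq h3.le]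
  have h7 : (2 * π)⁻¹ * ((Real.sqrt s)⁻¹ * Real.sqrt (2 * π)) = (Real.sqrt s)⁻¹ * (Real.sqrt (2 * π))⁻¹ := by
    rw [show (2 * π)⁻¹ * ((Real.sqrt s)⁻¹ * Real.sqrt (2 * π)) = (Real.sqrt s)⁻¹ * ((2 * π)⁻¹ * Real.sqrt (2 * π)) from by ring, h8]
  calc (2 * π)⁻¹ * Real.exp (-(a ^ 2 / s) / 2) * ((Real.sqrt s)⁻¹ * Real.sqrt (2 * π))
      = ((2 * π)⁻¹ * ((Real.sqrt s)⁻¹ * Real.sqrt (2 * π))) * Real.exp (-(a ^ 2 / s) / 2) := by ring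
    _ = (Real.sqrt s)⁻¹ * (Real.sqrt (2 * π))⁻¹ * Real.exp (-(a ^ 2 / s) / 2) := by rw [h7]
    _ = 1 / Real.sqrt s * ((Real.sqrt (2 * π))⁻¹ * Real.exp (-(a ^ 2 / s) / 2)) := by
        rw [one_div]; ring

theorem gaussian_x_cdf_smoothing (a b : ℝ) :
    (∫ x : ℝ, x * stdCDF (a + b * x) * stdPDF x) =
      (b / Real.sqrt (1 + b ^ 2)) * stdPDF (a / Real.sqrt (1 + b ^ 2)) := by
  set F : ℝ → ℝ := fun x => -(stdCDF (a + b * x) * stdPDF x) with hF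
  set f' : ℝ → ℝ := fun x =>
    x * stdCDF (a + b * x) * stdPDF x - b * (stdPDF (a + b * x) * stdPDF x) with hf'
  have hderiv : ∀ x, HasDerivAt F (f' x) x := by
    intro x
    have hinner : HasDerivAt (fun y : ℝ => a + b * y) b x := by
      simpa using ((hasDerivAt_id x).const_mul b).const_add a
    have h1 : HasDerivAt (fun y => stdCDF (a + b * y)) (stdPDF (a + b * x) * b) x :=
      (hasDerivAt_stdCDF (a + b * x)).comp (h₂ := stdCDF) x hinner
    have h2 := (h1.mul (hasDerivAt_stdPDF x)).neg
    refine h2.congr_deriv ?_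
    simp only [hf']
    ring
  have hint : Integrable f' :=
    (integrable_main a b).sub ((integrable_prod a b).const_mul b)
  have hbound : ∀ x, ‖F x‖ ≤ stdPDF x := by
    intro x
    rw [hF]
    simp only [norm_neg, Real.norm_eq_abs, abs_mul]
    calc |stdCDF (a + b * x)| * |stdPDF x| ≤ 1 * |stdPDF x| := by
          gcongr
          rw [abs_of_nonneg (stdCDF_nonneg _)]; exact stdCDF_le_one _
      _ = stdPDF x := by rw [one_mul, abs_of_nonneg (stdPDF_nonneg x)]
  have htop : Filter.Tendsto F Filter.atTop (nhds 0) :=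
    squeeze_zero_norm hbound tendsto_stdPDF_atTop
  have hbot : Filter.Tendsto F Filter.atBot (nhds 0) :=
    squeeze_zero_norm hbound tendsto_stdPDF_atBot
  have hzero : ∫ x, f' x = 0 := by
    rw [MeasureTheory.integral_of_hasDerivAt_of_tendsto hderiv hint hbot htop]
    simp
  have hsplit : ∫ x, f' x = (∫ x, x * stdCDF (a + b * x) * stdPDF x)
      - ∫ x, b * (stdPDF (a + b * x) * stdPDF x) :=
    integral_sub (integrable_main a b) ((integrable_prod a b).const_mul b)
  rw [hsplit] at hzero
  rw [sub_eq_zero] at hzero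
  rw [hzero, integral_const_mul, integral_prod_eq]
  rw [div_eq_mul_one_div]
  ring
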